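/- Let A be an n×n matrix with strictly positive entries and Perron eigenvalue β, and let v be a probability vector. Then vᵀ exp((A - βI)t) converges as t → ∞ to a nonzero nonnegative multiple of the left Perron eigenvector of A. -/

import Mathlib

open Matrix Filter

section ExpHelpers

variable {n : ℕ}

private noncomputable def entryLM (i j : Fin n) :
    Matrix (Fin n) (Fin n) ℝ →ₗ[ℝ] ℝ where
  toFun M := M i j
  map_add' _ _ := rfl
  map_smul' _ _ := rfl

private noncomputable def vecMulLM (μ : Fin n → ℝ) :
    Matrix (Fin n) (Fin n) ℝ →ₗ[ℝ] (Fin n → ℝ) where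
  toFun M := Matrix.vecMul μ M
  map_add' A B := Matrix.vecMul_add A B μ
  map_smul' c M := by
    ext j
    simp [Matrix.vecMul, dotProduct, smul_eq_mul, Finset.mul_sum, mul_left_comm]

private lemma hasSum_linmap_exp {E : Type*} [NormedAddCommGroup E] [NormedSpace ℝ E]
    (L : Matrix (Fin n) (Fin n) ℝ →ₗ[ℝ] E) (M : Matrix (Fin n) (Fin n) ℝ) :
    HasSum (fun k : ℕ => ((k.factorial : ℝ))⁻¹ • L (M ^ k)) (L (NormedSpace.exp M)) := by
  letI : NormedRing (Matrix (Fin n) (Fin n) ℝ) := Matrix.linftyOpNormedRing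
  letI : NormedAlgebra ℝ (Matrix (Fin n) (Fin n) ℝ) := Matrix.linftyOpNormedAlgebra
  have hL : Continuous L := LinearMap.continuous_of_finiteDimensional L
  have hs : Summable (fun k : ℕ => ((k.factorial : ℝ))⁻¹ • M ^ k) := by
    exact NormedSpace.expSeries_summable' (𝕂 := ℝ) M
  have h2 := (hs.hasSum.map L.toAddMonoidHom hL)
  have h3 : HasSum (fun k : ℕ => ((k.factorial : ℝ))⁻¹ • L (M ^ k))
      (L (∑' k : ℕ, ((k.factorial : ℝ))⁻¹ • M ^ k)) := by
    convert h2 using 2 with k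
    simp [Function.comp]
    rfl
  have h4 : NormedSpace.exp M = ∑' k : ℕ, ((k.factorial : ℝ))⁻¹ • M ^ k := by
    rw [NormedSpace.exp_eq_tsum ℝ]
  rw [h4]
  exact h3

private lemma pow_entry_nonneg {M : Matrix (Fin n) (Fin n) ℝ} (h : ∀ i j, 0 ≤ M i j) :
    ∀ (k : ℕ) (i j : Fin n), 0 ≤ (M ^ k) i j := by
  intro k
  induction k with
  | zero =>
      intro i j
      simp only [pow_zero]
      rw [Matrix.one_apply]
      split <;> norm_num
  | succ k ih =>
      intro i j
      rw [pow_succ, Matrix.mul_apply]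
      exact Finset.sum_nonneg fun l _ => mul_nonneg (ih i l) (h l j)

private lemma hasSum_exp_entry (M : Matrix (Fin n) (Fin n) ℝ) (i j : Fin n) :
    HasSum (fun k : ℕ => ((k.factorial : ℝ))⁻¹ * (M ^ k) i j) (NormedSpace.exp M i j) := by
  exact hasSum_linmap_exp (entryLM i j) M

private lemma exp_entry_nonneg {M : Matrix (Fin n) (Fin n) ℝ} (h : ∀ i j, 0 ≤ M i j)
    (i j : Fin n) : 0 ≤ NormedSpace.exp M i j := by
  refine hasSum_le (fun k => ?_) hasSum_zero (hasSum_exp_entry M i j)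
  exact mul_nonneg (by positivity) (pow_entry_nonneg h k i j)

private lemma exp_entry_lb {M : Matrix (Fin n) (Fin n) ℝ} (h : ∀ i j, 0 ≤ M i j)
    (i j : Fin n) : M i j ≤ NormedSpace.exp M i j := by
  have h1 := le_hasSum (hasSum_exp_entry M i j) 1
    (fun k _ => mul_nonneg (by positivity) (pow_entry_nonneg h k i j))
  simpa using h1

private lemma vecMul_exp_eq {μ : Fin n → ℝ} {M : Matrix (Fin n) (Fin n) ℝ}
    (h : Matrix.vecMul μ M = 0) : Matrix.vecMul μ (NormedSpace.exp M) = μ := by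
  have hh := hasSum_linmap_exp (vecMulLM μ) M
  have h0 : ∀ k : ℕ, k ≠ 0 → ((k.factorial : ℝ))⁻¹ • (vecMulLM (n := n) μ) (M ^ k) = 0 := by
    intro k hk
    obtain ⟨l, rfl⟩ := Nat.exists_eq_succ_of_ne_zero hk
    have : Matrix.vecMul μ (M ^ (l + 1)) = 0 := by
      rw [pow_succ', ← Matrix.vecMul_vecMul, h, Matrix.zero_vecMul]
    simp [vecMulLM, this]
  have := hh.tsum_eq
  rw [tsum_eq_single 0 h0] at this
  simpa [vecMulLM] using this.symm

private lemma exp_smul_sub (A : Matrix (Fin n) (Fin n) ℝ) (β t : ℝ) :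
    NormedSpace.exp (t • (A - β • (1 : Matrix (Fin n) (Fin n) ℝ)))
      = Real.exp (-(t * β)) • NormedSpace.exp (t • A) := by
  letI : NormedRing (Matrix (Fin n) (Fin n) ℝ) := Matrix.linftyOpNormedRing
  letI : NormedAlgebra ℝ (Matrix (Fin n) (Fin n) ℝ) := Matrix.linftyOpNormedAlgebra
  have h1 : t • (A - β • (1 : Matrix (Fin n) (Fin n) ℝ))
      = t • A + (-(t * β)) • (1 : Matrix (Fin n) (Fin n) ℝ) := by
    rw [smul_sub, smul_smul, sub_eq_add_neg, neg_smul]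
  have hc : Commute (t • A) ((-(t * β)) • (1 : Matrix (Fin n) (Fin n) ℝ)) :=
    ((Commute.one_right (t • A)).smul_right _)
  rw [h1, Matrix.exp_add_of_commute _ _ hc]
  have h2 : ((-(t * β)) • (1 : Matrix (Fin n) (Fin n) ℝ))
      = algebraMap ℝ (Matrix (Fin n) (Fin n) ℝ) (-(t * β)) := by
    rw [Algebra.algebraMap_eq_smul_one]
  rw [h2]
  erw [← NormedSpace.algebraMap_exp_comm]
  rw [Algebra.algebraMap_eq_smul_one,
    ← Real.exp_eq_exp_ℝ, mul_smul_comm, mul_one]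

private lemma exp_semigroup (B : Matrix (Fin n) (Fin n) ℝ) (s t : ℝ) :
    NormedSpace.exp ((s + t) • B)
      = NormedSpace.exp (s • B) * NormedSpace.exp (t • B) := by
  rw [add_smul]
  exact Matrix.exp_add_of_commute _ _ (((Commute.refl B).smul_left s).smul_right t)

end ExpHelpers

section Doeblin

private lemma doeblin_tendsto {n : ℕ} (hne : (Finset.univ : Finset (Fin n)).Nonempty)
    (μ : Fin n → ℝ) (hμpos : ∀ i, 0 < μ i)
    (P : ℝ → Matrix (Fin n) (Fin n) ℝ)
    (x : ℝ → Fin n → ℝ)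
    (δ : ℝ) (hδ : 0 < δ)
    (hP0 : ∀ t, 0 ≤ t → ∀ i j, 0 ≤ P t i j)
    (hPδ : ∀ i j, δ ≤ P 1 i j)
    (hPμ : ∀ t, 0 ≤ t → Matrix.vecMul μ (P t) = μ)
    (hx : ∀ s t, 0 ≤ t → x (s + t) = Matrix.vecMul (x s) (P t))
    (hx1 : ∀ i, 0 < x 1 i) :
    ∃ c : ℝ, 0 < c ∧ Tendsto x atTop (nhds (c • μ)) := by
  classical
  set m : ℝ → ℝ := fun t => Finset.univ.inf' hne (fun i => x t i / μ i) with hm_def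
  set Mx : ℝ → ℝ := fun t => Finset.univ.sup' hne (fun i => x t i / μ i) with hMx_def
  have hml : ∀ t i, m t * μ i ≤ x t i := by
    intro t i
    have h1 : m t ≤ x t i / μ i := Finset.inf'_le _ (Finset.mem_univ i)
    exact (le_div_iff₀ (hμpos i)).mp h1
  have hMu : ∀ t i, x t i ≤ Mx t * μ i := by
    intro t i
    have h1 : x t i / μ i ≤ Mx t := Finset.le_sup' (fun i => x t i / μ i) (Finset.mem_univ i)
    exact (div_le_iff₀ (hμpos i)).mp h1
  have hmM : ∀ t, m t ≤ Mx t := by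
    intro t
    obtain ⟨i, hi⟩ := hne
    exact le_trans (Finset.inf'_le _ hi) (Finset.le_sup' (fun i => x t i / μ i) hi)
  have hxf : ∀ s t, 0 ≤ t → ∀ j, x (s + t) j = ∑ i, x s i * P t i j := by
    intro s t ht j
    rw [hx s t ht]
    simp [Matrix.vecMul, dotProduct]
  have hinv : ∀ t, 0 ≤ t → ∀ j, ∑ i, μ i * P t i j = μ j := by
    intro t ht j
    have h1 := congrFun (hPμ t ht) j
    simpa [Matrix.vecMul, dotProduct] using h1
  have key_lo : ∀ s t, 0 ≤ t → ∀ j, m s * μ j ≤ x (s + t) j := by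
    intro s t ht j
    rw [hxf s t ht j]
    calc m s * μ j = m s * ∑ i, μ i * P t i j := by rw [hinv t ht j]
      _ = ∑ i, (m s * μ i) * P t i j := by rw [Finset.mul_sum]; congr 1; ext i; ring
      _ ≤ ∑ i, x s i * P t i j :=
          Finset.sum_le_sum fun i _ => mul_le_mul_of_nonneg_right (hml s i) (hP0 t ht i j)
  have key_hi : ∀ s t, 0 ≤ t → ∀ j, x (s + t) j ≤ Mx s * μ j := by
    intro s t ht j
    rw [hxf s t ht j]
    calc ∑ i, x s i * P t i j
        ≤ ∑ i, (Mx s * μ i) * P t i j :=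
          Finset.sum_le_sum fun i _ => mul_le_mul_of_nonneg_right (hMu s i) (hP0 t ht i j)
      _ = Mx s * ∑ i, μ i * P t i j := by rw [Finset.mul_sum]; congr 1; ext i; ring
      _ = Mx s * μ j := by rw [hinv t ht j]
  have hm_mono : ∀ s t, 0 ≤ t → m s ≤ m (s + t) := by
    intro s t ht
    refine Finset.le_inf' _ _ fun j _ => ?_
    rw [le_div_iff₀ (hμpos j)]
    exact key_lo s t ht j
  have hM_anti : ∀ s t, 0 ≤ t → Mx (s + t) ≤ Mx s := by
    intro s t ht
    refine Finset.sup'_le _ _ fun j _ => ?_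
    rw [div_le_iff₀ (hμpos j)]
    exact key_hi s t ht j
  -- the contraction constant
  set μmin : ℝ := Finset.univ.inf' hne μ with hμmin_def
  set μmax : ℝ := Finset.univ.sup' hne μ with hμmax_def
  have hμminpos : 0 < μmin := (Finset.lt_inf'_iff hne).mpr fun i _ => hμpos i
  have hμminle : ∀ i, μmin ≤ μ i := fun i => Finset.inf'_le _ (Finset.mem_univ i)
  have hμmaxle : ∀ i, μ i ≤ μmax := fun i => Finset.le_sup' μ (Finset.mem_univ i)
  have hμmaxpos : 0 < μmax := by
    obtain ⟨i, _⟩ := hne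
    exact lt_of_lt_of_le (hμpos i) (hμmaxle i)
  set γ : ℝ := min (δ * μmin / μmax) (1 / 2) with hγ_def
  have hγpos : 0 < γ := lt_min (by positivity) (by norm_num)
  have hγle : γ ≤ 1 / 2 := min_le_right _ _
  have hcontr : ∀ s : ℝ, m s + γ * (Mx s - m s) ≤ m (s + 1) := by
    intro s
    obtain ⟨i0, _, hi0⟩ := Finset.exists_mem_eq_sup' hne (fun i => x s i / μ i)
    have hxi0 : Mx s * μ i0 = x s i0 := by
      show (Finset.univ.sup' hne fun i => x s i / μ i) * μ i0 = x s i0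
      rw [hi0]
      exact div_mul_cancel₀ _ (hμpos i0).ne'
    have hΔ : 0 ≤ Mx s - m s := sub_nonneg.2 (hmM s)
    refine Finset.le_inf' _ _ fun j _ => ?_
    rw [le_div_iff₀ (hμpos j)]
    have e1 : x (s + 1) j = ∑ i, x s i * P 1 i j := hxf s 1 zero_le_one j
    have e2 : ∑ i, x s i * P 1 i j
        = (∑ i, (x s i - m s * μ i) * P 1 i j) + m s * μ j := by
      have h3 : ∑ i, (x s i - m s * μ i) * P 1 i j
          = ∑ i, x s i * P 1 i j - m s * ∑ i, μ i * P 1 i j := by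
        rw [Finset.mul_sum, ← Finset.sum_sub_distrib]
        congr 1; ext i; ring
      rw [h3, hinv 1 zero_le_one j]; ring
    have e3 : (Mx s - m s) * (δ * μmin) ≤ ∑ i, (x s i - m s * μ i) * P 1 i j := by
      have hterm : ∀ i ∈ Finset.univ, (0 : ℝ) ≤ (x s i - m s * μ i) * P 1 i j := fun i _ =>
        mul_nonneg (sub_nonneg.2 (hml s i)) (hP0 1 zero_le_one i j)
      have hsingle := Finset.single_le_sum hterm (Finset.mem_univ i0)
      have h4 : (Mx s - m s) * (δ * μmin) ≤ (x s i0 - m s * μ i0) * P 1 i0 j := by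
        rw [← hxi0, ← sub_mul]
        have hA : μmin * δ ≤ μ i0 * P 1 i0 j :=
          mul_le_mul (hμminle i0) (hPδ i0 j) hδ.le (hμpos i0).le
        calc (Mx s - m s) * (δ * μmin) = (Mx s - m s) * (μmin * δ) := by ring
          _ ≤ (Mx s - m s) * (μ i0 * P 1 i0 j) := mul_le_mul_of_nonneg_left hA hΔ
          _ = (Mx s - m s) * μ i0 * P 1 i0 j := by ring
      exact le_trans h4 hsingle
    have e4 : γ * (Mx s - m s) * μ j ≤ (Mx s - m s) * (δ * μmin) := by
      have hγ1 : γ ≤ δ * μmin / μmax := min_le_left _ _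
      have h5 : γ * μ j ≤ δ * μmin := by
        calc γ * μ j ≤ (δ * μmin / μmax) * μmax :=
              mul_le_mul hγ1 (hμmaxle j) (hμpos j).le (by positivity)
          _ = δ * μmin := by field_simp
      nlinarith [hγpos, hμpos j]
    have e5 : γ * (Mx s - m s) * μ j ≤ ∑ i, (x s i - m s * μ i) * P 1 i j :=
      le_trans e4 e3
    rw [e1, e2]
    nlinarith [e5]
  -- integer sequences
  set a : ℕ → ℝ := fun k => m k with ha_def
  set b : ℕ → ℝ := fun k => Mx k with hb_def
  have hcast : ∀ k l : ℕ, k ≤ l → (0 : ℝ) ≤ (l : ℝ) - (k : ℝ) := by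
    intro k l hkl
    have : (k : ℝ) ≤ (l : ℝ) := Nat.cast_le.2 hkl
    linarith
  have ha_mono : Monotone a := by
    intro k l hkl
    have h := hm_mono (k : ℝ) ((l : ℝ) - (k : ℝ)) (hcast k l hkl)
    simpa using h
  have hb_anti : Antitone b := by
    intro k l hkl
    have h := hM_anti (k : ℝ) ((l : ℝ) - (k : ℝ)) (hcast k l hkl)
    simpa using h
  have hab : ∀ k, a k ≤ b k := fun k => hmM _
  have hbddA : BddAbove (Set.range a) := by
    refine ⟨b 0, ?_⟩
    rintro _ ⟨k, rfl⟩
    exact (hab k).trans (hb_anti (Nat.zero_le k))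
  have hbddB : BddBelow (Set.range b) := by
    refine ⟨a 0, ?_⟩
    rintro _ ⟨k, rfl⟩
    exact (ha_mono (Nat.zero_le k)).trans (hab k)
  set c : ℝ := ⨆ k, a k with hc_def
  set c' : ℝ := ⨅ k, b k with hc'_def
  have hac : Tendsto a atTop (nhds c) := tendsto_atTop_ciSup ha_mono hbddA
  have hbc : Tendsto b atTop (nhds c') := tendsto_atTop_ciInf hb_anti hbddB
  set q : ℝ := 1 - γ with hq_def
  have hq0 : 0 ≤ q := by rw [hq_def]; linarith
  have hq1 : q < 1 := by rw [hq_def]; linarith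
  have hgap : ∀ k : ℕ, b k - a k ≤ q ^ k * (b 0 - a 0) := by
    intro k
    induction k with
    | zero => simp
    | succ k ih =>
        have hcs : ((k + 1 : ℕ) : ℝ) = (k : ℝ) + 1 := by push_cast; ring
        have h2 := hcontr (k : ℝ)
        have h3 := hM_anti (k : ℝ) 1 zero_le_one
        have h1 : b (k + 1) - a (k + 1) ≤ q * (b k - a k) := by
          rw [ha_def, hb_def]
          simp only [hcs]
          rw [hq_def]
          have hab' : m (k : ℝ) ≤ Mx (k : ℝ) := hmM _
          nlinarith [h2, h3]
        calc b (k + 1) - a (k + 1) ≤ q * (b k - a k) := h1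
          _ ≤ q * (q ^ k * (b 0 - a 0)) := mul_le_mul_of_nonneg_left ih hq0
          _ = q ^ (k + 1) * (b 0 - a 0) := by ring
  have hgeo : Tendsto (fun k : ℕ => q ^ k * (b 0 - a 0)) atTop (nhds 0) := by
    simpa using (tendsto_pow_atTop_nhds_zero_of_lt_one hq0 hq1).mul_const (b 0 - a 0)
  have hgapto : Tendsto (fun k : ℕ => b k - a k) atTop (nhds 0) :=
    squeeze_zero (fun k => sub_nonneg.2 (hab k)) hgap hgeo
  have hcc : c' = c := by
    have h1 : Tendsto (fun k : ℕ => b k - a k) atTop (nhds (c' - c)) := hbc.sub hac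
    have h2 := tendsto_nhds_unique h1 hgapto
    linarith
  have hm1pos : 0 < m 1 :=
    (Finset.lt_inf'_iff hne).mpr fun i _ => div_pos (hx1 i) (hμpos i)
  have hcpos : 0 < c := by
    have h1 : a 1 ≤ c := le_ciSup hbddA 1
    have h2 : a 1 = m 1 := by rw [ha_def]; norm_num
    linarith
  refine ⟨c, hcpos, ?_⟩
  rw [tendsto_pi_nhds]
  intro i
  have hlow : Tendsto (fun t : ℝ => a ⌊t⌋₊ * μ i) atTop (nhds (c * μ i)) :=
    (hac.comp (tendsto_nat_floor_atTop (α := ℝ))).mul_const _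
  have hup : Tendsto (fun t : ℝ => b ⌊t⌋₊ * μ i) atTop (nhds (c * μ i)) := by
    have := (hbc.comp (tendsto_nat_floor_atTop (α := ℝ))).mul_const (μ i)
    rwa [hcc] at this
  have hgoal : Tendsto (fun t : ℝ => x t i) atTop (nhds (c * μ i)) := by
    refine tendsto_of_tendsto_of_tendsto_of_le_of_le' hlow hup ?_ ?_
    · filter_upwards [eventually_ge_atTop (0 : ℝ)] with t ht
      have h1 : m ((⌊t⌋₊ : ℕ) : ℝ) ≤ m t := by
        have h := hm_mono ((⌊t⌋₊ : ℕ) : ℝ) (t - ((⌊t⌋₊ : ℕ) : ℝ))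
          (sub_nonneg.2 (Nat.floor_le ht))
        simpa using h
      exact le_trans (mul_le_mul_of_nonneg_right h1 (hμpos i).le) (hml t i)
    · filter_upwards [eventually_ge_atTop (0 : ℝ)] with t ht
      have h1 : Mx t ≤ Mx ((⌊t⌋₊ : ℕ) : ℝ) := by
        have h := hM_anti ((⌊t⌋₊ : ℕ) : ℝ) (t - ((⌊t⌋₊ : ℕ) : ℝ))
          (sub_nonneg.2 (Nat.floor_le ht))
        simpa using h
      exact le_trans (hMu t i) (mul_le_mul_of_nonneg_right h1 (hμpos i).le)
  simpa [Pi.smul_apply, smul_eq_mul] using hgoal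

end Doeblin

/-- for a strictly positive matrix `A` with Perron eigenvalue `β`
and a probability vector `v`, `vᵀ exp((A - βI)t)` converges to a strictly
positive multiple of the left Perron eigenvector of `A`. -/
theorem semigroup_converges_to_perron {n : ℕ} (A : Matrix (Fin n) (Fin n) ℝ)
    (hApos : ∀ i j, 0 < A i j)
    (β : ℝ) (hβpos : 0 < β) (hβmem : β ∈ spectrum ℝ A)
    (hβmax : ∀ z ∈ spectrum ℂ (A.map (Complex.ofReal)), ‖z‖ ≤ β)
    (μbar : Fin n → ℝ) (hμpos : ∀ i, 0 < μbar i) (hμsum : (∑ i, μbar i) = 1)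
    (hμeig : Matrix.vecMul μbar A = β • μbar)
    (v : Fin n → ℝ) (hvnonneg : ∀ i, 0 ≤ v i) (hvsum : (∑ i, v i) = 1) :
    ∃ c : ℝ, 0 < c ∧
      Tendsto (fun t : ℝ => Matrix.vecMul v
          (NormedSpace.exp (t • (A - β • (1 : Matrix (Fin n) (Fin n) ℝ)))))
        atTop (nhds (c • μbar)) := by
  classical
  -- n is positive
  rcases Nat.eq_zero_or_pos n with hn | hn
  · exfalso
    subst hn
    simp at hμsum
  have hne : (Finset.univ : Finset (Fin n)).Nonempty := ⟨⟨0, hn⟩, Finset.mem_univ _⟩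
  set B : Matrix (Fin n) (Fin n) ℝ := A - β • (1 : Matrix (Fin n) (Fin n) ℝ) with hB_def
  set P : ℝ → Matrix (Fin n) (Fin n) ℝ := fun t => NormedSpace.exp (t • B) with hP_def
  -- μbar annihilates B on the left
  have hμB : Matrix.vecMul μbar B = 0 := by
    rw [hB_def, Matrix.vecMul_sub, hμeig]
    ext j
    rw [Matrix.smul_one_eq_diagonal]
    simp [Matrix.vecMul_diagonal, mul_comm]
  -- exp formula
  have hPform : ∀ t : ℝ, P t = Real.exp (-(t * β)) • NormedSpace.exp (t • A) :=
    fun t => exp_smul_sub A β t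
  -- invariance of μbar
  have hPμ : ∀ t : ℝ, Matrix.vecMul μbar (P t) = μbar := by
    intro t
    refine vecMul_exp_eq ?_
    have h1 : Matrix.vecMul μbar (t • B) = t • Matrix.vecMul μbar B :=
      (vecMulLM μbar).map_smul t B
    rw [h1, hμB, smul_zero]
  -- nonnegativity of entries of P t for t ≥ 0
  have hP0 : ∀ t : ℝ, 0 ≤ t → ∀ i j, 0 ≤ P t i j := by
    intro t ht i j
    rw [hPform t]
    have h1 : ∀ i j, 0 ≤ (t • A) i j := fun i j =>
      mul_nonneg ht (hApos i j).le
    have h2 := exp_entry_nonneg h1 i j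
    simpa [Matrix.smul_apply, smul_eq_mul] using
      mul_nonneg (Real.exp_pos (-(t * β))).le h2
  -- strict positivity of entries of P 1
  have hP1pos : ∀ i j, 0 < P 1 i j := by
    intro i j
    rw [hPform 1]
    have h1 : ∀ i j, 0 ≤ ((1 : ℝ) • A) i j := fun i j => by
      simpa using (hApos i j).le
    have h2 : ((1 : ℝ) • A) i j ≤ NormedSpace.exp ((1 : ℝ) • A) i j := exp_entry_lb h1 i j
    have h3 : 0 < NormedSpace.exp ((1 : ℝ) • A) i j := by
      have := hApos i j
      simp only [one_smul] at h2 ⊢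
      linarith
    simpa [Matrix.smul_apply, smul_eq_mul] using
      mul_pos (Real.exp_pos (-(1 * β))) h3
  -- the Doeblin constant
  have hne2 : (Finset.univ : Finset (Fin n × Fin n)).Nonempty :=
    ⟨(⟨0, hn⟩, ⟨0, hn⟩), Finset.mem_univ _⟩
  set δ : ℝ := Finset.univ.inf' hne2 (fun p : Fin n × Fin n => P 1 p.1 p.2) with hδ_def
  have hδpos : 0 < δ := (Finset.lt_inf'_iff hne2).mpr fun p _ => hP1pos p.1 p.2
  have hPδ : ∀ i j, δ ≤ P 1 i j := fun i j =>
    Finset.inf'_le _ (Finset.mem_univ ((i, j) : Fin n × Fin n))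
  -- the orbit
  set x : ℝ → Fin n → ℝ := fun t => Matrix.vecMul v (P t) with hx_def
  have hx : ∀ s t : ℝ, 0 ≤ t → x (s + t) = Matrix.vecMul (x s) (P t) := by
    intro s t _
    rw [hx_def]
    simp only []
    rw [hP_def]
    simp only []
    rw [exp_semigroup B s t, ← Matrix.vecMul_vecMul]
  have hx1 : ∀ j, 0 < x 1 j := by
    intro j
    have h1 : x 1 j = ∑ i, v i * P 1 i j := by
      rw [hx_def]
      simp [Matrix.vecMul, dotProduct]
    have h2 : ∑ i, v i * δ ≤ ∑ i, v i * P 1 i j :=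
      Finset.sum_le_sum fun i _ => mul_le_mul_of_nonneg_left (hPδ i j) (hvnonneg i)
    have h3 : ∑ i, v i * δ = δ := by
      rw [← Finset.sum_mul, hvsum, one_mul]
    rw [h1]
    linarith
  obtain ⟨c, hcpos, hct⟩ :=
    doeblin_tendsto hne μbar hμpos P x δ hδpos hP0 hPδ (fun t _ => hPμ t) hx hx1
  exact ⟨c, hcpos, hct⟩
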